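/- Let k be a field, d a positive integer, and suppose that every homogeneous element of degree < d − ⌊γ/2⌋ in the colon ideal (x_1^d, x_2^d) : (x_1+x_2)^γ of k[x_1,x_2] lies in (x_1^d, x_2^d), where γ = 2c is even. Then every homogeneous element of degree < d − c − 1 in (x_1^d, x_2^d) : (x_1+x_2)^{2c+1} lies in (x_1^d, x_2^d). -/
import Mathlib


open MvPolynomial

/-- Observation 3.5: in `k[x₁,x₂]`, if every homogeneous element of
`(x₁^d, x₂^d) : (x₁+x₂)^{2c}` of degree `< d − c` lies in `(x₁^d, x₂^d)`, then every
homogeneous element of `(x₁^d, x₂^d) : (x₁+x₂)^{2c+1}` of degree `< d − c − 1` lies in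
`(x₁^d, x₂^d)`. -/
theorem stmt8 {k : Type*} [Field k] (d : ℕ) (hd : 1 ≤ d) (c : ℕ)
    (I : Ideal (MvPolynomial (Fin 2) k))
    (hI : I = Ideal.span {(X 0 : MvPolynomial (Fin 2) k) ^ d, (X 1) ^ d})
    (hyp : ∀ (m : ℕ) (f : MvPolynomial (Fin 2) k),
      f ∈ homogeneousSubmodule (Fin 2) k m →
      f * (X 0 + X 1) ^ (2 * c) ∈ I →
      (m : ℤ) < (d : ℤ) - c → f ∈ I) :
    ∀ (m : ℕ) (f : MvPolynomial (Fin 2) k),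
      f ∈ homogeneousSubmodule (Fin 2) k m →
      f * (X 0 + X 1) ^ (2 * c + 1) ∈ I →
      (m : ℤ) < (d : ℤ) - c - 1 → f ∈ I := by
  intro m f hf hfI hm
  have hXadd : ((X 0 + X 1 : MvPolynomial (Fin 2) k)).IsHomogeneous 1 :=
    (isHomogeneous_X k 0).add (isHomogeneous_X k 1)
  have hg : ((f * (X 0 + X 1) : MvPolynomial (Fin 2) k)).IsHomogeneous (m + 1) :=
    (hf : f.IsHomogeneous m).mul hXadd
  have h1 : f * (X 0 + X 1) ∈ I := by
    apply hyp (m + 1) (f * (X 0 + X 1)) hg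
    · have : f * (X 0 + X 1) * (X 0 + X 1) ^ (2 * c) = f * (X 0 + X 1) ^ (2 * c + 1) := by
        ring
      rw [this]; exact hfI
    · push_cast; omega
  -- every element of I has all monomials of degree ≥ d, so f * (X0 + X1) = 0
  obtain ⟨a, b, hab⟩ := Ideal.mem_span_pair.mp (hI ▸ h1)
  have hz : f * (X 0 + X 1) = 0 := by
    ext s
    rw [coeff_zero]
    by_contra hs
    have hdeg : s.degree = m + 1 := by
      by_contra h; exact hs (hg.coeff_eq_zero h)
    have hlt : (m : ℤ) + 1 < d := by omega
    have hs0 : ¬ Finsupp.single (0 : Fin 2) d ≤ s := by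
      rw [Finsupp.single_le_iff]
      intro h
      have : s 0 ≤ s.degree := Finsupp.le_degree 0 s
      omega
    have hs1 : ¬ Finsupp.single (1 : Fin 2) d ≤ s := by
      rw [Finsupp.single_le_iff]
      intro h
      have : s 1 ≤ s.degree := Finsupp.le_degree 1 s
      omega
    have hc : coeff s (a * X 0 ^ d + b * X 1 ^ d) = 0 := by
      rw [coeff_add, X_pow_eq_monomial, X_pow_eq_monomial,
        coeff_mul_monomial', coeff_mul_monomial', if_neg hs0, if_neg hs1, add_zero]
    rw [hab] at hc
    exact hs hc
  have hX : (X 0 + X 1 : MvPolynomial (Fin 2) k) ≠ 0 := by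
    intro h
    have := congrArg (coeff (Finsupp.single 0 1)) h
    rw [coeff_add, coeff_X', coeff_X', if_pos rfl, if_neg, coeff_zero] at this
    · simp at this
    · intro h'
      have := Finsupp.single_left_injective (one_ne_zero) h'
      exact (by decide : (1 : Fin 2) ≠ 0) this
  have hf0 : f = 0 := by
    rcases mul_eq_zero.mp hz with h | h
    · exact h
    · exact absurd h hX
  rw [hf0]
  exact Ideal.zero_mem I
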